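/- Let C ⊆ ℝ be a nonempty closed convex set, let c ∈ [0, 1], let γ ≥ 0, and let x ∈ ℝ satisfy |x| ≤ infDist(0, C). Let p be the point of C nearest to x. Then ∫ infDist((1-c)·x + √(2γ)·e, C)² d(gaussianReal 0 1)(e) ≥ ∫ infDist((1-c)·p + √(2γ)·e, C)² d(gaussianReal 0 1)(e); that is, the expected projection cost after one noisy PGDM update applied to the projected point is no larger than after the same update applied to the unprojected point. (One-dimensional expectation form of Theorem 1 with the Gaussian score.) -/

import Mathlib

open MeasureTheory Metric ProbabilityTheory

private lemma dist_formula {C : Set ℝ} {a : ℝ} (haC : a ∈ C) (hC : C ⊆ Set.Ici a)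
    {s : ℝ} (hs : s ≤ a) : infDist s C = a - s := by
  refine le_antisymm ?_ ?_
  · calc infDist s C ≤ dist s a := infDist_le_dist_of_mem haC
      _ = a - s := by rw [Real.dist_eq, abs_of_nonpos (by linarith)]; ring
  · by_contra h
    push_neg at h
    obtain ⟨y, hyC, hy⟩ := (infDist_lt_iff ⟨a, haC⟩).mp h
    have hay : a ≤ y := hC hyC
    rw [Real.dist_eq, abs_of_nonpos (by linarith)] at hy
    linarith

private lemma key {C : Set ℝ} {a : ℝ} (haC : a ∈ C) (hC : C ⊆ Set.Ici a)
    {t t' : ℝ} (htt : t ≤ t') (ht' : t' ≤ a) {w : ℝ} (hw : 0 ≤ w) :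
    infDist (t' + w) C ^ 2 + infDist (t' - w) C ^ 2 ≤
      infDist (t + w) C ^ 2 + infDist (t - w) C ^ 2 := by
  have h1 : infDist (t - w) C = a - t + w := by
    rw [dist_formula haC hC (by linarith)]; ring
  have h2 : infDist (t' - w) C = a - t' + w := by
    rw [dist_formula haC hC (by linarith)]; ring
  set dp := infDist (t + w) C with hdp
  set dq := infDist (t' + w) C with hdq
  have h3 : dq ≤ dp + (t' - t) := by
    calc dq ≤ dp + dist (t' + w) (t + w) := infDist_le_infDist_add_dist
      _ = dp + (t' - t) := by
          rw [Real.dist_eq, abs_of_nonneg (by linarith)]; ring_nf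
  have h4 : dp ≤ (a - t) + w := by
    calc dp ≤ dist (t + w) a := infDist_le_dist_of_mem haC
      _ ≤ (a - t) + w := by
          rw [Real.dist_eq]; exact abs_le.mpr ⟨by linarith, by linarith⟩
  have h5 : dq ≤ (a - t') + w := by
    calc dq ≤ dist (t' + w) a := infDist_le_dist_of_mem haC
      _ ≤ (a - t') + w := by
          rw [Real.dist_eq]; exact abs_le.mpr ⟨by linarith, by linarith⟩
  have h6 : (0 : ℝ) ≤ dp := infDist_nonneg
  have h7 : (0 : ℝ) ≤ dq := infDist_nonneg
  rw [h1, h2]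
  nlinarith [mul_nonneg (show (0:ℝ) ≤ dp + (t' - t) - dq by linarith)
      (show (0:ℝ) ≤ dq + dp by linarith),
    mul_nonneg (show (0:ℝ) ≤ t' - t by linarith)
      (show (0:ℝ) ≤ (a - t + w) + (a - t' + w) - dq - dp by linarith)]

private lemma keyN {C : Set ℝ} {b : ℝ} (hbC : b ∈ C) (hC : C ⊆ Set.Iic b)
    {t t' : ℝ} (htt : t' ≤ t) (ht' : b ≤ t') {w : ℝ} (hw : 0 ≤ w) :
    infDist (t' + w) C ^ 2 + infDist (t' - w) C ^ 2 ≤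
      infDist (t + w) C ^ 2 + infDist (t - w) C ^ 2 := by
  have hmem : -b ∈ Neg.neg '' C := ⟨b, hbC, rfl⟩
  have hsub : Neg.neg '' C ⊆ Set.Ici (-b) := by
    rintro y ⟨z, hz, rfl⟩
    exact Set.mem_Ici.mpr (neg_le_neg (Set.mem_Iic.mp (hC hz)))
  have hkey := key hmem hsub (t := -t) (t' := -t') (by linarith) (by linarith) hw
  have e1 : ∀ z : ℝ, infDist (-z) (Neg.neg '' C) = infDist z C := fun z =>
    infDist_image isometry_neg
  have r1 : (-t' + w) = -(t' - w) := by ring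
  have r2 : (-t' - w) = -(t' + w) := by ring
  have r3 : (-t + w) = -(t - w) := by ring
  have r4 : (-t - w) = -(t + w) := by ring
  rw [r1, r2, r3, r4, e1, e1, e1, e1] at hkey
  linarith

private lemma int_sq : Integrable (fun e : ℝ => e ^ 2) (gaussianReal 0 1) := by
  rw [gaussianReal_of_var_ne_zero 0 one_ne_zero,
    integrable_withDensity_iff (measurable_gaussianPDF 0 1)
      (ae_of_all _ fun x => ENNReal.ofReal_lt_top)]
  have h : ∀ x : ℝ, (gaussianPDF 0 1 x).toReal
      = (Real.sqrt (2 * Real.pi))⁻¹ * Real.exp (-(1/2) * x ^ 2) := by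
    intro x
    rw [gaussianPDF, ENNReal.toReal_ofReal (gaussianPDFReal_nonneg _ _ _), gaussianPDFReal]
    push_cast
    rw [mul_one, sub_zero]
    congr 1
    ring
  simp_rw [h]
  have base := integrable_rpow_mul_exp_neg_mul_sq (show (0:ℝ) < 1/2 by norm_num)
    (show (-1:ℝ) < 2 by norm_num)
  simp_rw [Real.rpow_two] at base
  have := base.const_mul (Real.sqrt (2 * Real.pi))⁻¹
  refine this.congr (ae_of_all _ fun x => ?_)
  ring

private lemma int_infDist (C : Set ℝ) (t s : ℝ) :
    Integrable (fun e : ℝ => infDist (t + s * e) C ^ 2) (gaussianReal 0 1) := by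
  have hcont : Continuous fun e : ℝ => infDist (t + s * e) C ^ 2 :=
    ((continuous_infDist_pt C).comp (by continuity)).pow 2
  refine Integrable.mono' ((integrable_const (2 * infDist t C ^ 2)).add
    (int_sq.const_mul (2 * s ^ 2))) hcont.aestronglyMeasurable (ae_of_all _ fun e => ?_)
  have hL : infDist (t + s * e) C ≤ infDist t C + |s * e| := by
    calc infDist (t + s * e) C ≤ infDist t C + dist (t + s * e) t :=
        infDist_le_infDist_add_dist
      _ = infDist t C + |s * e| := by
          rw [Real.dist_eq]; congr 1; congr 1; ring
  have h0 : (0:ℝ) ≤ infDist (t + s * e) C := infDist_nonneg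
  have h0' : (0:ℝ) ≤ infDist t C := infDist_nonneg
  simp only [Pi.add_apply]
  rw [Real.norm_eq_abs, abs_of_nonneg (by positivity)]
  have habs : |s * e| ^ 2 = s ^ 2 * e ^ 2 := by
    rw [sq_abs, mul_pow]
  nlinarith [mul_nonneg (sub_nonneg.2 hL)
      (show (0:ℝ) ≤ infDist t C + |s * e| + infDist (t + s * e) C by positivity),
    sq_nonneg (infDist t C - |s * e|)]

private lemma gauss_neg : (gaussianReal 0 1).map (fun e : ℝ => -e) = gaussianReal 0 1 := by
  have h := gaussianReal_map_const_mul (μ := 0) (v := 1) (-1)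
  have h2 : (fun x : ℝ => -1 * x) = fun x : ℝ => -x := by funext x; ring
  have h3 : (⟨(-1 : ℝ) ^ 2, sq_nonneg _⟩ : NNReal) = 1 := by ext; norm_num
  rw [h2, mul_zero] at h
  rw [h]; congr 1; ext; norm_num

private lemma int_neg (C : Set ℝ) (t s : ℝ) :
    ∫ e, infDist (t + s * e) C ^ 2 ∂(gaussianReal 0 1)
      = ∫ e, infDist (t - s * e) C ^ 2 ∂(gaussianReal 0 1) := by
  have hcont : Continuous fun e : ℝ => infDist (t - s * e) C ^ 2 :=
    ((continuous_infDist_pt C).comp (by continuity)).pow 2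
  have hcont' : Continuous fun e : ℝ => infDist (t + s * e) C ^ 2 :=
    ((continuous_infDist_pt C).comp (by continuity)).pow 2
  conv_lhs => rw [← gauss_neg]
  rw [integral_map (by fun_prop) hcont'.aestronglyMeasurable]
  congr 1
  funext e
  congr 2
  ring

/-- Core integral comparison from the pointwise symmetrized inequality. -/
private lemma core (C : Set ℝ) (u v s : ℝ)
    (hpt : ∀ w : ℝ, infDist (v + w) C ^ 2 + infDist (v - w) C ^ 2 ≤
      infDist (u + w) C ^ 2 + infDist (u - w) C ^ 2) :
    ∫ e, infDist (v + s * e) C ^ 2 ∂(gaussianReal 0 1) ≤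
      ∫ e, infDist (u + s * e) C ^ 2 ∂(gaussianReal 0 1) := by
  have hu := int_infDist C u s
  have hv := int_infDist C v s
  have hu' : Integrable (fun e : ℝ => infDist (u - s * e) C ^ 2) (gaussianReal 0 1) := by
    have := int_infDist C u (-s)
    refine this.congr (ae_of_all _ fun e => ?_)
    ring_nf
  have hv' : Integrable (fun e : ℝ => infDist (v - s * e) C ^ 2) (gaussianReal 0 1) := by
    have := int_infDist C v (-s)
    refine this.congr (ae_of_all _ fun e => ?_)
    ring_nf
  have hmono : ∫ e, (infDist (v + s * e) C ^ 2 + infDist (v - s * e) C ^ 2)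
        ∂(gaussianReal 0 1)
      ≤ ∫ e, (infDist (u + s * e) C ^ 2 + infDist (u - s * e) C ^ 2)
        ∂(gaussianReal 0 1) :=
    integral_mono (hv.add hv') (hu.add hu') fun e => hpt (s * e)
  rw [integral_add hv hv', integral_add hu hu', ← int_neg C u s, ← int_neg C v s] at hmono
  linarith

/-- One-dimensional expectation form of Theorem 1 with the Gaussian score: if
`|x| ≤ infDist 0 C` and `p` is the nearest point of the nonempty closed convex
set `C ⊆ ℝ` to `x`, then the expected projection cost after one noisy PGDM update
applied to `p` is no larger than after the same update applied to `x`. -/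
theorem stmt18 (C : Set ℝ) (hCne : C.Nonempty) (hCcl : IsClosed C) (hCcv : Convex ℝ C)
    (c : ℝ) (hc : c ∈ Set.Icc (0 : ℝ) 1) (γ : ℝ) (hγ : 0 ≤ γ)
    (x : ℝ) (hx : |x| ≤ infDist 0 C)
    (p : ℝ) (hpC : p ∈ C) (hpd : dist x p = infDist x C) :
    ∫ e, infDist ((1 - c) * x + Real.sqrt (2 * γ) * e) C ^ 2 ∂(gaussianReal 0 1) ≥
      ∫ e, infDist ((1 - c) * p + Real.sqrt (2 * γ) * e) C ^ 2 ∂(gaussianReal 0 1) := by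
  obtain ⟨hc0, hc1⟩ := hc
  rcases eq_or_lt_of_le (infDist_nonneg (x := (0:ℝ)) (s := C)) with h0 | h0
  · -- infDist 0 C = 0, so 0 ∈ C, x = 0, p = 0
    have hx0 : x = 0 := abs_eq_zero.mp (le_antisymm (hx.trans h0.ge) (abs_nonneg x))
    have h0C : (0:ℝ) ∈ C := (hCcl.mem_iff_infDist_zero hCne).mpr h0.symm
    have hxC : infDist x C = 0 := by rw [hx0]; exact h0.symm
    have hp0 : p = x := by
      have : dist x p = 0 := by rw [hpd, hxC]
      exact (dist_eq_zero.mp this).symm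
    rw [hp0]
  · -- infDist 0 C > 0, so 0 ∉ C and C lies on one side of 0
    have h0C : (0:ℝ) ∉ C := fun h => by
      rw [infDist_zero_of_mem h] at h0; exact lt_irrefl _ h0
    have hside : (∀ y ∈ C, 0 < y) ∨ (∀ y ∈ C, y < 0) := by
      by_contra h
      push_neg at h
      obtain ⟨⟨y1, hy1, hy1'⟩, ⟨y2, hy2, hy2'⟩⟩ := h
      exact h0C (hCcv.ordConnected.out hy1 hy2 ⟨hy1', hy2'⟩)
    rcases hside with hpos | hneg
    · -- C ⊆ (0, ∞): let a = sInf C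
      have hbdd : BddBelow C := ⟨0, fun y hy => (hpos y hy).le⟩
      set a := sInf C with ha
      have haC : a ∈ C := hCcl.csInf_mem hCne hbdd
      have hCa : C ⊆ Set.Ici a := fun y hy => csInf_le hbdd hy
      have ha0 : 0 < a := hpos a haC
      have hinf0 : infDist 0 C = a := by
        rw [dist_formula haC hCa ha0.le]; ring
      have hxa : x ≤ a := le_trans (le_abs_self x) (hx.trans_eq hinf0)
      have hpa : p = a := by
        have h1 : infDist x C = a - x := dist_formula haC hCa hxa
        have h2 : a ≤ p := hCa hpC
        have h3 : |x - p| = a - x := by rw [← Real.dist_eq, hpd, h1]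
        rw [abs_of_nonpos (by linarith)] at h3
        linarith
      have hxabs : -a ≤ x := by
        have := abs_le.mp (hx.trans_eq hinf0)
        exact this.1
      refine core C ((1 - c) * x) ((1 - c) * p) (Real.sqrt (2 * γ)) fun w => ?_
      rcases le_or_gt 0 w with hw | hw
      · exact key haC hCa
          (by nlinarith) (by rw [hpa]; nlinarith) hw
      · have hk := key haC hCa (t := (1 - c) * x) (t' := (1 - c) * p)
          (by nlinarith) (by rw [hpa]; nlinarith) (neg_nonneg.mpr hw.le)
        have e1 : ∀ z : ℝ, z + -w = z - w := fun z => by ring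
        have e2 : ∀ z : ℝ, z - -w = z + w := fun z => by ring
        rw [e1, e1, e2, e2] at hk
        linarith
    · -- C ⊆ (-∞, 0): let b = sSup C
      have hbdd : BddAbove C := ⟨0, fun y hy => (hneg y hy).le⟩
      set b := sSup C with hb
      have hbC : b ∈ C := hCcl.csSup_mem hCne hbdd
      have hCb : C ⊆ Set.Iic b := fun y hy => le_csSup hbdd hy
      have hb0 : b < 0 := hneg b hbC
      have hinf0 : infDist 0 C = -b := by
        have hmem : -b ∈ Neg.neg '' C := ⟨b, hbC, rfl⟩
        have hsub : Neg.neg '' C ⊆ Set.Ici (-b) := by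
          rintro y ⟨z, hz, rfl⟩
          exact Set.mem_Ici.mpr (neg_le_neg (Set.mem_Iic.mp (hCb hz)))
        have : infDist (-(0:ℝ)) (Neg.neg '' C) = infDist 0 C := infDist_image isometry_neg
        rw [neg_zero] at this
        rw [← this, dist_formula hmem hsub (by linarith)]
        ring
      have hxb : b ≤ x := by
        have := abs_le.mp (hx.trans_eq hinf0)
        linarith [this.1]
      have hpb : p = b := by
        have h1 : infDist x C = x - b := by
          have hmem : -b ∈ Neg.neg '' C := ⟨b, hbC, rfl⟩
          have hsub : Neg.neg '' C ⊆ Set.Ici (-b) := by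
            rintro y ⟨z, hz, rfl⟩
            exact Set.mem_Ici.mpr (neg_le_neg (Set.mem_Iic.mp (hCb hz)))
          have himg : infDist (-x) (Neg.neg '' C) = infDist x C := infDist_image isometry_neg
          rw [← himg, dist_formula hmem hsub (by linarith)]
          ring
        have h2 : p ≤ b := hCb hpC
        have h3 : |x - p| = x - b := by rw [← Real.dist_eq, hpd, h1]
        rw [abs_of_nonneg (by linarith)] at h3
        linarith
      have hxabs : x ≤ -b := by
        have := abs_le.mp (hx.trans_eq hinf0)
        exact this.2
      refine core C ((1 - c) * x) ((1 - c) * p) (Real.sqrt (2 * γ)) fun w => ?_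
      rcases le_or_gt 0 w with hw | hw
      · exact keyN hbC hCb
          (by nlinarith) (by rw [hpb]; nlinarith) hw
      · have hk := keyN hbC hCb (t := (1 - c) * x) (t' := (1 - c) * p)
          (by nlinarith) (by rw [hpb]; nlinarith) (neg_nonneg.mpr hw.le)
        have e1 : ∀ z : ℝ, z + -w = z - w := fun z => by ring
        have e2 : ∀ z : ℝ, z - -w = z + w := fun z => by ring
        rw [e1, e1, e2, e2] at hk
        linarith
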